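/- Let ℓ₁ denote the real Banach space of absolutely summable real sequences indexed by ℕ (or by a finite set {1, …, N}) with norm ‖x‖ = Σ_n |x_n|. For every x = (x_n) ∈ B_{ℓ₁}, one has Dc(x) = Δc(x) = 1 + ‖x‖ − 2·sup_n |x_n|. -/

import Mathlib

open Set Metric Filter
open scoped ENNReal

set_option maxHeartbeats 1000000

variable {X : Type*} [NormedAddCommGroup X] [NormedSpace ℝ X]

/-- The slice `S(f, δ)` of the closed unit ball of `X`, determined by a norm-one functional
`f` and `δ > 0` (the norm and positivity conditions are imposed at use sites). -/
def unitBallSlice (f : X →L[ℝ] ℝ) (δ : ℝ) : Set X :=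
  {y | ‖y‖ ≤ 1 ∧ 1 - δ < f y}

/-- The Daugavet constant of a point: the infimum over all slices of the unit ball of the
supremum of distances from `x` to points of the slice. -/
noncomputable def Dc (x : X) : ℝ :=
  sInf {r | ∃ (f : X →L[ℝ] ℝ) (δ : ℝ), ‖f‖ = 1 ∧ 0 < δ ∧
    r = sSup ((fun y => ‖x - y‖) '' unitBallSlice f δ)}

/-- The Δ-constant of a point: the infimum over all slices of the unit ball containing `x`
of the supremum of distances from `x` to points of the slice. -/
noncomputable def DeltaC (x : X) : ℝ :=
  sInf {r | ∃ (f : X →L[ℝ] ℝ) (δ : ℝ), ‖f‖ = 1 ∧ 0 < δ ∧ x ∈ unitBallSlice f δ ∧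
    r = sSup ((fun y => ‖x - y‖) '' unitBallSlice f δ)}

theorem dc_deltaC_eq (x : X) (hx : ‖x‖ ≤ 1) (v : ℝ)
    (hA : ∀ f : X →L[ℝ] ℝ, ‖f‖ = 1 → ∀ δ : ℝ, 0 < δ →
      ∃ y, y ∈ unitBallSlice f δ ∧ v ≤ ‖x - y‖)
    (hB : ∀ ε : ℝ, 0 < ε → ∃ f : X →L[ℝ] ℝ, ∃ δ : ℝ, ‖f‖ = 1 ∧ 0 < δ ∧ 1 - δ < f x ∧
      ∀ y, y ∈ unitBallSlice f δ → ‖x - y‖ ≤ v + ε) :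
    Dc x = v ∧ DeltaC x = v := by
  set S₁ := {r | ∃ (f : X →L[ℝ] ℝ) (δ : ℝ), ‖f‖ = 1 ∧ 0 < δ ∧
    r = sSup ((fun y => ‖x - y‖) '' unitBallSlice f δ)} with hS₁
  set S₂ := {r | ∃ (f : X →L[ℝ] ℝ) (δ : ℝ), ‖f‖ = 1 ∧ 0 < δ ∧ x ∈ unitBallSlice f δ ∧
    r = sSup ((fun y => ‖x - y‖) '' unitBallSlice f δ)} with hS₂
  have hsub : S₂ ⊆ S₁ := by
    rintro r ⟨f, δ, h1, h2, _, h4⟩; exact ⟨f, δ, h1, h2, h4⟩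
  have himgBdd : ∀ (f : X →L[ℝ] ℝ) (δ : ℝ),
      BddAbove ((fun y => ‖x - y‖) '' unitBallSlice f δ) := by
    intro f δ
    refine ⟨‖x‖ + 1, ?_⟩
    rintro r ⟨y, hy, rfl⟩
    calc ‖x - y‖ ≤ ‖x‖ + ‖y‖ := norm_sub_le _ _
    _ ≤ ‖x‖ + 1 := by linarith [hy.1]
  have hlow : ∀ r ∈ S₁, v ≤ r := by
    rintro r ⟨f, δ, h1, h2, rfl⟩
    obtain ⟨y, hy, hvy⟩ := hA f h1 δ h2
    exact hvy.trans (le_csSup (himgBdd f δ) ⟨y, hy, rfl⟩)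
  have hB' : ∀ ε : ℝ, 0 < ε → ∃ r ∈ S₂, r ≤ v + ε := by
    intro ε hε
    obtain ⟨f, δ, h1, h2, h3, h4⟩ := hB ε hε
    have hxmem : x ∈ unitBallSlice f δ := ⟨hx, h3⟩
    refine ⟨_, ⟨f, δ, h1, h2, hxmem, rfl⟩, ?_⟩
    refine Real.sSup_le ?_ ?_
    · rintro r ⟨y, hy, rfl⟩; exact h4 y hy
    · have := h4 x hxmem; simp at this; linarith
  have hne₂ : S₂.Nonempty := by
    obtain ⟨r, hr, -⟩ := hB' 1 one_pos; exact ⟨r, hr⟩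
  have hbdd₁ : BddBelow S₁ := ⟨v, hlow⟩
  have hDup : ∀ (T : Set ℝ), T ⊆ S₁ → (∀ ε : ℝ, 0 < ε → ∃ r ∈ T, r ≤ v + ε) →
      T.Nonempty → sInf T = v := by
    intro T hTsub hTε hTne
    refine le_antisymm ?_ (le_csInf hTne fun r hr => hlow r (hTsub hr))
    refine le_of_forall_pos_le_add fun ε hε => ?_
    obtain ⟨r, hr, hrle⟩ := hTε ε hε
    exact (csInf_le (hbdd₁.mono hTsub) hr).trans hrle
  constructor
  · exact hDup S₁ subset_rfl (fun ε hε => (hB' ε hε).imp fun r ⟨h1, h2⟩ => ⟨hsub h1, h2⟩)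
      (hne₂.mono hsub)
  · exact hDup S₂ hsub hB' hne₂

/-! ### The `ℓ₁(ℕ)` case -/

section lpNat
local notation "E₁" => lp (fun _ : ℕ => ℝ) 1

lemma l1_norm (z : E₁) : ‖z‖ = ∑' j, |z j| := by
  have := lp.norm_eq_tsum_rpow (p := 1) (by norm_num) z
  simpa using this

lemma l1_summable (z : E₁) : Summable fun j => |z j| := by
  have := (lp.memℓp z).summable (p := 1) (by norm_num)
  simpa using this

lemma l1_coord_le (z : E₁) (k : ℕ) : |z k| ≤ ‖z‖ := by
  rw [l1_norm]
  exact Summable.le_tsum (l1_summable z) k fun j _ => abs_nonneg _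

lemma ite_summable (z : E₁) (k : ℕ) : Summable fun j => if j = k then (0:ℝ) else |z j| := by
  have h := (l1_summable z).indicator ({k}ᶜ : Set ℕ)
  refine h.congr fun j => ?_
  by_cases hj : j = k <;> simp [Set.indicator, hj]

lemma l1_norm_split (z : E₁) (k : ℕ) :
    ‖z‖ = |z k| + ∑' j, if j = k then (0:ℝ) else |z j| := by
  rw [l1_norm]; exact Summable.tsum_eq_add_tsum_ite (l1_summable z) k

lemma l1_key (x y : E₁) (k : ℕ) :
    ‖x - y‖ ≤ |x k - y k| + (‖x‖ - |x k|) + (‖y‖ - |y k|) := by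
  have hsub : ∀ j, (x - y : E₁) j = x j - y j := fun j => by
    rw [lp.coeFn_sub]; rfl
  have h1 : ‖x - y‖ = |x k - y k| + ∑' j, if j = k then (0:ℝ) else |(x - y : E₁) j| := by
    rw [l1_norm_split (x - y) k, hsub]
  have h2 : (∑' j, if j = k then (0:ℝ) else |(x - y : E₁) j|) ≤
      ∑' j, ((if j = k then (0:ℝ) else |x j|) + (if j = k then (0:ℝ) else |y j|)) := by
    refine Summable.tsum_le_tsum (fun j => ?_) (ite_summable (x - y) k)
      ((ite_summable x k).add (ite_summable y k))
    by_cases hj : j = k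
    · simp [hj]
    · simp only [if_neg hj, hsub j]
      exact abs_sub _ _
  have h3 : (∑' j, ((if j = k then (0:ℝ) else |x j|) + (if j = k then (0:ℝ) else |y j|)))
      = (‖x‖ - |x k|) + (‖y‖ - |y k|) := by
    rw [Summable.tsum_add (ite_summable x k) (ite_summable y k)]
    have hx := l1_norm_split x k
    have hy := l1_norm_split y k
    linarith
  linarith [h1, h2, h3]

noncomputable def l1e (k : ℕ) : E₁ := lp.single 1 k (1 : ℝ)

lemma l1e_apply_self (k : ℕ) : (l1e k) k = 1 := lp.single_apply_self _ _ _

lemma l1e_apply_ne (k : ℕ) {j : ℕ} (h : j ≠ k) : (l1e k) j = 0 := lp.single_apply_ne _ _ _ h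

lemma l1e_norm (k : ℕ) : ‖l1e k‖ = 1 := by
  have := lp.norm_single (E := fun _ : ℕ => ℝ) (p := 1) (by norm_num) k (1:ℝ)
  rw [l1e, this]; simp

noncomputable def l1coord (s : ℝ) (k : ℕ) : E₁ →L[ℝ] ℝ :=
  LinearMap.mkContinuous
    { toFun := fun z => s * z k
      map_add' := fun z w => by
        have h := congrFun (lp.coeFn_add z w) k
        simp only [Pi.add_apply] at h
        simp only [h]; ring
      map_smul' := fun c z => by
        have h := congrFun (lp.coeFn_smul c z) k
        simp only [Pi.smul_apply, smul_eq_mul] at h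
        simp only [h, RingHom.id_apply, smul_eq_mul]; ring }
    |s| (fun z => by
      simp only [LinearMap.coe_mk, AddHom.coe_mk, Real.norm_eq_abs, abs_mul]
      exact mul_le_mul_of_nonneg_left (l1_coord_le z k) (abs_nonneg s))

lemma l1coord_apply (s : ℝ) (k : ℕ) (z : E₁) : l1coord s k z = s * z k := rfl

lemma l1coord_norm (s : ℝ) (hs : |s| = 1) (k : ℕ) : ‖l1coord s k‖ = 1 := by
  refine le_antisymm (LinearMap.mkContinuous_norm_le _ zero_le_one fun z => ?_) ?_
  · simp only [LinearMap.coe_mk, AddHom.coe_mk, one_mul]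
    calc |s * z k| = |s| * |z k| := abs_mul _ _
    _ ≤ 1 * ‖z‖ := by rw [hs, one_mul]; simpa using l1_coord_le z k
    _ = ‖z‖ := one_mul _
  · have h := (l1coord s k).le_opNorm (l1e k)
    rw [l1coord_apply, l1e_apply_self, l1e_norm, mul_one, mul_one] at h
    calc (1:ℝ) = |s| := hs.symm
    _ ≤ ‖l1coord s k‖ := by rwa [Real.norm_eq_abs] at h

lemma l1_exists_coord (f : E₁ →L[ℝ] ℝ) (hf : ‖f‖ = 1) {δ : ℝ} (hδ : 0 < δ) :
    ∃ k, 1 - δ < |f (l1e k)| := by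
  by_contra hcon
  push_neg at hcon
  have h0 : (0:ℝ) ≤ 1 - δ := le_trans (abs_nonneg _) (hcon 0)
  have : ‖f‖ ≤ 1 - δ := by
    refine f.opNorm_le_bound h0 fun z => ?_
    haveI : Fact ((1:ℝ≥0∞) ≤ 1) := ⟨le_refl _⟩
    have hs : HasSum (fun i => lp.single 1 i (z i : ℝ)) z :=
      lp.hasSum_single (by norm_num) z
    have hs2 : HasSum (fun i => f (lp.single 1 i (z i : ℝ))) (f z) := hs.mapL f
    have heq : ∀ i, f (lp.single 1 i (z i : ℝ)) = z i * f (l1e i) := by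
      intro i
      have : lp.single 1 i (z i : ℝ) = z i • l1e i := by
        rw [l1e]
        rw [← lp.single_smul]
        norm_num
      rw [this, map_smul, smul_eq_mul]
    have hs3 : HasSum (fun i => z i * f (l1e i)) (f z) := by
      simpa only [heq] using hs2
    have hb : ∀ i, |z i * f (l1e i)| ≤ (1 - δ) * |z i| := fun i => by
      rw [abs_mul, mul_comm]
      exact mul_le_mul_of_nonneg_right (hcon i) (abs_nonneg _)
    have hsum2 : Summable fun i => (1 - δ) * |z i| := (l1_summable z).mul_left _
    have hsum : Summable fun i => |z i * f (l1e i)| :=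
      Summable.of_nonneg_of_le (fun i => abs_nonneg _) hb hsum2
    calc ‖f z‖ = |∑' i, z i * f (l1e i)| := by rw [hs3.tsum_eq, Real.norm_eq_abs]
    _ ≤ ∑' i, |z i * f (l1e i)| := by
        have hsumn : Summable fun i => ‖z i * f (l1e i)‖ := by
          simpa only [Real.norm_eq_abs] using hsum
        have := norm_tsum_le_tsum_norm hsumn
        simpa only [Real.norm_eq_abs] using this
    _ ≤ ∑' i, (1 - δ) * |z i| := Summable.tsum_le_tsum hb hsum hsum2
    _ = (1 - δ) * ‖z‖ := by rw [tsum_mul_left, l1_norm]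
  rw [hf] at this; linarith

lemma l1_lower_norm (x : E₁) (k : ℕ) (σ : ℝ) (hσ : |σ| = 1) :
    1 + ‖x‖ - 2 * |x k| ≤ ‖x - σ • l1e k‖ := by
  have hsub : ∀ j, (x - σ • l1e k : E₁) j = x j - σ * (l1e k) j := fun j => by
    rw [lp.coeFn_sub]
    have h := congrFun (lp.coeFn_smul σ (l1e k)) j
    simp only [Pi.smul_apply, smul_eq_mul] at h
    simp [h]
  have h1 : ‖x - σ • l1e k‖ = |x k - σ| +
      ∑' j, if j = k then (0:ℝ) else |(x - σ • l1e k : E₁) j| := by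
    rw [l1_norm_split (x - σ • l1e k) k, hsub k, l1e_apply_self, mul_one]
  have h2 : (∑' j, if j = k then (0:ℝ) else |(x - σ • l1e k : E₁) j|)
      = ∑' j, if j = k then (0:ℝ) else |x j| := by
    refine tsum_congr fun j => ?_
    by_cases hj : j = k
    · simp [hj]
    · rw [if_neg hj, if_neg hj, hsub j, l1e_apply_ne k hj, mul_zero, sub_zero]
  have h3 : 1 - |x k| ≤ |x k - σ| := by
    have := abs_sub_abs_le_abs_sub σ (x k)
    rw [hσ, abs_sub_comm] at this
    linarith
  have h4 := l1_norm_split x k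
  linarith [h1, h2, h3, h4]

lemma l1_main (x : E₁) (hx : ‖x‖ ≤ 1) :
    Dc x = 1 + ‖x‖ - 2 * (⨆ n : ℕ, |x n|) ∧
    DeltaC x = 1 + ‖x‖ - 2 * (⨆ n : ℕ, |x n|) := by
  have hbdd : BddAbove (range fun n : ℕ => |x n|) := by
    refine ⟨‖x‖, ?_⟩
    rintro r ⟨n, rfl⟩
    exact l1_coord_le x n
  set M := ⨆ n : ℕ, |x n| with hM
  have hMx : ∀ n, |x n| ≤ M := fun n => le_ciSup hbdd n
  refine dc_deltaC_eq x hx _ ?_ ?_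
  · -- lower bound
    intro f hf δ hδ
    obtain ⟨k, hk⟩ := l1_exists_coord f hf hδ
    set c := f (l1e k) with hc
    set σ := if 0 ≤ c then (1:ℝ) else -1 with hσdef
    have hσ : |σ| = 1 := by
      by_cases h : 0 ≤ c <;> simp [hσdef, h]
    have hσc : σ * c = |c| := by
      rcases le_or_gt 0 c with h | h
      · simp [hσdef, h, abs_of_nonneg h]
      · simp [hσdef, not_le.mpr h, abs_of_neg h]
    refine ⟨σ • l1e k, ⟨?_, ?_⟩, ?_⟩
    · rw [norm_smul, Real.norm_eq_abs, hσ, l1e_norm, one_mul]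
    · rw [map_smul, smul_eq_mul, hσc]
      exact hk
    · calc 1 + ‖x‖ - 2 * M ≤ 1 + ‖x‖ - 2 * |x k| := by linarith [hMx k]
      _ ≤ ‖x - σ • l1e k‖ := l1_lower_norm x k σ hσ
  · -- upper bound
    intro ε hε
    have hε4 : 0 < ε / 4 := by linarith
    obtain ⟨n₀, hn₀⟩ : ∃ n₀ : ℕ, M - ε / 4 < |x n₀| :=
      exists_lt_of_lt_ciSup (by linarith : M - ε / 4 < M)
    set s := if 0 ≤ x n₀ then (1:ℝ) else -1 with hsdef
    have hs : |s| = 1 := by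
      by_cases h : 0 ≤ x n₀ <;> simp [hsdef, h]
    have hsx : s * x n₀ = |x n₀| := by
      rcases le_or_gt 0 (x n₀) with h | h
      · simp [hsdef, h, abs_of_nonneg h]
      · simp [hsdef, not_le.mpr h, abs_of_neg h]
    set a := |x n₀| with ha
    have ha1 : a ≤ ‖x‖ := l1_coord_le x n₀
    refine ⟨l1coord s n₀, 1 - a + ε / 4, l1coord_norm s hs n₀, by linarith, ?_, ?_⟩
    · rw [l1coord_apply, hsx]
      linarith
    · rintro y ⟨hy1, hy2⟩
      rw [l1coord_apply] at hy2
      set u := s * y n₀ with hu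
      have hyu : u ≤ |y n₀| := by
        calc u ≤ |s * y n₀| := le_abs_self _
        _ = |y n₀| := by rw [abs_mul, hs, one_mul]
      have hu2 : a - ε / 4 < u := by linarith
      have habs : |x n₀ - y n₀| = |a - u| := by
        have h : a - u = s * (x n₀ - y n₀) := by rw [mul_sub, hsx, hu]
        rw [h, abs_mul, hs, one_mul]
      have hkey := l1_key x y n₀
      rw [habs] at hkey
      rcases abs_cases (a - u) with ⟨h1, _⟩ | ⟨h1, _⟩ <;> linarith [hMx n₀]

end lpNat


/-! ### The finite-dimensional case -/

section PiLpPart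
variable {N : ℕ}

local notation "F₁" => PiLp 1 (fun _ : Fin N => ℝ)

lemma p1_norm (z : F₁) : ‖z‖ = ∑ j, |z j| := by
  rw [PiLp.norm_eq_sum (by norm_num : (0:ℝ) < (1:ℝ≥0∞).toReal)]
  simp

lemma p1_coord_le (z : F₁) (k : Fin N) : |z k| ≤ ‖z‖ := by
  rw [p1_norm]
  exact Finset.single_le_sum (f := fun j => |z j|) (fun j _ => abs_nonneg _)
    (Finset.mem_univ k)

lemma p1_norm_split (z : F₁) (k : Fin N) :
    ‖z‖ = |z k| + ∑ j ∈ Finset.univ.erase k, |z j| := by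
  rw [p1_norm, ← Finset.add_sum_erase _ _ (Finset.mem_univ k)]

lemma p1_key (x y : F₁) (k : Fin N) :
    ‖x - y‖ ≤ |x k - y k| + (‖x‖ - |x k|) + (‖y‖ - |y k|) := by
  have hxk := p1_norm_split x k
  have hyk := p1_norm_split y k
  have hxyk := p1_norm_split (x - y) k
  have hsub : ∀ j, (x - y : F₁) j = x j - y j := fun j => rfl
  have h2 : (∑ j ∈ Finset.univ.erase k, |(x - y : F₁) j|) ≤
      (∑ j ∈ Finset.univ.erase k, |x j|) + ∑ j ∈ Finset.univ.erase k, |y j| := by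
    rw [← Finset.sum_add_distrib]
    refine Finset.sum_le_sum fun j _ => ?_
    rw [hsub j]
    exact abs_sub _ _
  have h3 : |(x - y : F₁) k| = |x k - y k| := by rw [hsub k]
  linarith

noncomputable def p1e (k : Fin N) : F₁ := (WithLp.equiv 1 (∀ _ : Fin N, ℝ)).symm (Pi.single k 1)

lemma p1e_apply (k j : Fin N) : (p1e k) j = if j = k then (1:ℝ) else 0 := by
  rw [p1e, WithLp.equiv_symm_apply, WithLp.ofLp_toLp, Pi.single_apply]

lemma p1e_norm (k : Fin N) : ‖p1e k‖ = 1 := by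
  rw [p1_norm]
  have h : ∀ j ∈ Finset.univ, |p1e k j| = if j = k then (1:ℝ) else 0 := fun j _ => by
    rw [p1e_apply]; split <;> simp
  rw [Finset.sum_congr rfl h]
  simp

noncomputable def p1coord (s : ℝ) (k : Fin N) : F₁ →L[ℝ] ℝ :=
  LinearMap.mkContinuous
    { toFun := fun z => s * z k
      map_add' := fun z w => by
        change s * (z k + w k) = s * z k + s * w k; ring
      map_smul' := fun c z => by
        change s * (c * z k) = c * (s * z k); ring }
    |s| (fun z => by
      simp only [LinearMap.coe_mk, AddHom.coe_mk, Real.norm_eq_abs, abs_mul]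
      exact mul_le_mul_of_nonneg_left (p1_coord_le z k) (abs_nonneg s))

lemma p1coord_apply (s : ℝ) (k : Fin N) (z : F₁) : p1coord s k z = s * z k := rfl

lemma p1coord_norm (s : ℝ) (hs : |s| = 1) (k : Fin N) : ‖p1coord s k‖ = 1 := by
  refine le_antisymm (LinearMap.mkContinuous_norm_le _ zero_le_one fun z => ?_) ?_
  · simp only [LinearMap.coe_mk, AddHom.coe_mk, one_mul, Real.norm_eq_abs, abs_mul, hs]
    exact p1_coord_le z k
  · have h := (p1coord s k).le_opNorm (p1e k)
    rw [p1coord_apply, p1e_apply, if_pos rfl, mul_one, p1e_norm, mul_one,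
      Real.norm_eq_abs, hs] at h
    exact h

lemma p1_exists_coord (f : F₁ →L[ℝ] ℝ) (hf : ‖f‖ = 1) {δ : ℝ} (hδ : 0 < δ) (hN : 0 < N) :
    ∃ k, 1 - δ < |f (p1e k)| := by
  by_contra hcon
  push_neg at hcon
  have h0 : (0:ℝ) ≤ 1 - δ := le_trans (abs_nonneg _) (hcon ⟨0, hN⟩)
  have : ‖f‖ ≤ 1 - δ := by
    refine f.opNorm_le_bound h0 fun z => ?_
    have hzdecomp : z = ∑ j, z j • p1e j := by
      ext i
      rw [WithLp.ofLp_sum, Finset.sum_apply]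
      rw [Finset.sum_congr rfl fun j _ => by
        show (z j • p1e j) i = z j * (if i = j then (1:ℝ) else 0)
        rw [PiLp.smul_apply, p1e_apply, smul_eq_mul]]
      simp
    have hfz : f z = ∑ j, z j * f (p1e j) := by
      conv_lhs => rw [hzdecomp]
      rw [map_sum]
      exact Finset.sum_congr rfl fun j _ => by rw [map_smul, smul_eq_mul]
    rw [hfz, Real.norm_eq_abs]
    calc |∑ j, z j * f (p1e j)| ≤ ∑ j, |z j * f (p1e j)| := Finset.abs_sum_le_sum_abs _ _
    _ ≤ ∑ j, (1 - δ) * |z j| := by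
        refine Finset.sum_le_sum fun j _ => ?_
        rw [abs_mul, mul_comm]
        exact mul_le_mul_of_nonneg_right (hcon j) (abs_nonneg _)
    _ = (1 - δ) * ‖z‖ := by rw [← Finset.mul_sum, p1_norm]
  rw [hf] at this; linarith

lemma p1_lower_norm (x : F₁) (k : Fin N) (σ : ℝ) (hσ : |σ| = 1) :
    1 + ‖x‖ - 2 * |x k| ≤ ‖x - σ • p1e k‖ := by
  have hsub : ∀ j, (x - σ • p1e k : F₁) j = x j - σ * (p1e k) j := fun j => by
    rfl
  have h1 := p1_norm_split (x - σ • p1e k) k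
  have h2 : (∑ j ∈ Finset.univ.erase k, |(x - σ • p1e k : F₁) j|)
      = ∑ j ∈ Finset.univ.erase k, |x j| := by
    refine Finset.sum_congr rfl fun j hj => ?_
    have hjk : j ≠ k := Finset.ne_of_mem_erase hj
    rw [hsub j, p1e_apply, if_neg hjk, mul_zero, sub_zero]
  have h3 : |(x - σ • p1e k : F₁) k| = |x k - σ| := by
    rw [hsub k, p1e_apply, if_pos rfl, mul_one]
  have h4 : 1 - |x k| ≤ |x k - σ| := by
    have := abs_sub_abs_le_abs_sub σ (x k)
    rw [hσ, abs_sub_comm] at this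
    linarith
  have h5 := p1_norm_split x k
  linarith

lemma p1_main (hN : 0 < N) (x : F₁) (hx : ‖x‖ ≤ 1) :
    Dc x = 1 + ‖x‖ - 2 * (⨆ n : Fin N, |x n|) ∧
    DeltaC x = 1 + ‖x‖ - 2 * (⨆ n : Fin N, |x n|) := by
  haveI : Nonempty (Fin N) := ⟨⟨0, hN⟩⟩
  have hbdd : BddAbove (range fun n : Fin N => |x n|) := (finite_range _).bddAbove
  set M := ⨆ n : Fin N, |x n| with hM
  have hMx : ∀ n, |x n| ≤ M := fun n => le_ciSup hbdd n
  refine dc_deltaC_eq x hx _ ?_ ?_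
  · intro f hf δ hδ
    obtain ⟨k, hk⟩ := p1_exists_coord f hf hδ hN
    set c := f (p1e k) with hc
    set σ := if 0 ≤ c then (1:ℝ) else -1 with hσdef
    have hσ : |σ| = 1 := by
      by_cases h : 0 ≤ c <;> simp [hσdef, h]
    have hσc : σ * c = |c| := by
      rcases le_or_gt 0 c with h | h
      · simp [hσdef, h, abs_of_nonneg h]
      · simp [hσdef, not_le.mpr h, abs_of_neg h]
    refine ⟨σ • p1e k, ⟨?_, ?_⟩, ?_⟩
    · rw [norm_smul, Real.norm_eq_abs, hσ, p1e_norm, one_mul]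
    · rw [map_smul, smul_eq_mul, hσc]
      exact hk
    · calc 1 + ‖x‖ - 2 * M ≤ 1 + ‖x‖ - 2 * |x k| := by linarith [hMx k]
      _ ≤ ‖x - σ • p1e k‖ := p1_lower_norm x k σ hσ
  · intro ε hε
    have hε4 : 0 < ε / 4 := by linarith
    obtain ⟨n₀, hn₀⟩ : ∃ n₀ : Fin N, M - ε / 4 < |x n₀| :=
      exists_lt_of_lt_ciSup (by linarith : M - ε / 4 < M)
    set s := if 0 ≤ x n₀ then (1:ℝ) else -1 with hsdef
    have hs : |s| = 1 := by
      by_cases h : 0 ≤ x n₀ <;> simp [hsdef, h]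
    have hsx : s * x n₀ = |x n₀| := by
      rcases le_or_gt 0 (x n₀) with h | h
      · simp [hsdef, h, abs_of_nonneg h]
      · simp [hsdef, not_le.mpr h, abs_of_neg h]
    set a := |x n₀| with ha
    have ha1 : a ≤ ‖x‖ := p1_coord_le x n₀
    refine ⟨p1coord s n₀, 1 - a + ε / 4, p1coord_norm s hs n₀, by linarith, ?_, ?_⟩
    · rw [p1coord_apply, hsx]
      linarith
    · rintro y ⟨hy1, hy2⟩
      rw [p1coord_apply] at hy2
      set u := s * y n₀ with hu
      have hyu : u ≤ |y n₀| := by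
        calc u ≤ |s * y n₀| := le_abs_self _
        _ = |y n₀| := by rw [abs_mul, hs, one_mul]
      have hu2 : a - ε / 4 < u := by linarith
      have habs : |x n₀ - y n₀| = |a - u| := by
        have h : a - u = s * (x n₀ - y n₀) := by rw [mul_sub, hsx, hu]
        rw [h, abs_mul, hs, one_mul]
      have hkey := p1_key x y n₀
      rw [habs] at hkey
      rcases abs_cases (a - u) with ⟨h1, _⟩ | ⟨h1, _⟩ <;> linarith [hMx n₀]


/-- In `ℓ₁` (indexed by `ℕ`, or by a finite set `Fin N`),
`Dc(x) = Δc(x) = 1 + ‖x‖ − 2·sup_n |x_n|`. -/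
theorem daugavetConstant_l1 :
    (∀ x : lp (fun _ : ℕ => ℝ) 1, ‖x‖ ≤ 1 →
        Dc x = 1 + ‖x‖ - 2 * (⨆ n : ℕ, |x n|) ∧
        DeltaC x = 1 + ‖x‖ - 2 * (⨆ n : ℕ, |x n|)) ∧
    (∀ (N : ℕ), 0 < N → ∀ x : PiLp 1 (fun _ : Fin N => ℝ), ‖x‖ ≤ 1 →
        Dc x = 1 + ‖x‖ - 2 * (⨆ n : Fin N, |x n|) ∧
        DeltaC x = 1 + ‖x‖ - 2 * (⨆ n : Fin N, |x n|)) :=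
  ⟨fun x hx => l1_main x hx, fun _ hN x hx => p1_main hN x hx⟩
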